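/- Let g(t) be a differentiable family of inner products on R^N and n(t) the g(t)-unit normal to a fixed hyperplane (i.e., g(t)(n, X) = 0 for all X in the hyperplane and g(t)(n, n) = 1). Then the derivative satisfies dn/dt = (1/2) ġ(n,n) n − L_ġ n, where L_ġ is the endomorphism with g(L_ġ X, Y) = ġ(X,Y). -/

import Mathlib

open Matrix

private lemma dot_hasDerivAt {N : ℕ} {a b : ℝ → Fin N → ℝ} {a' b' : Fin N → ℝ} {t : ℝ}
    (ha : ∀ i, HasDerivAt (fun u => a u i) (a' i) t)
    (hb : ∀ i, HasDerivAt (fun u => b u i) (b' i) t) :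
    HasDerivAt (fun u => a u ⬝ᵥ b u) (a' ⬝ᵥ b t + a t ⬝ᵥ b') t := by
  simpa [dotProduct, Finset.sum_add_distrib] using
    HasDerivAt.fun_sum (fun i _ => (ha i).mul (hb i))

private lemma mulVec_hasDerivAt {N : ℕ} {g : ℝ → Matrix (Fin N) (Fin N) ℝ}
    {g'' : Matrix (Fin N) (Fin N) ℝ} {b : ℝ → Fin N → ℝ} {b' : Fin N → ℝ} {t : ℝ}
    (hg : ∀ i j, HasDerivAt (fun u => g u i j) (g'' i j) t)
    (hb : ∀ j, HasDerivAt (fun u => b u j) (b' j) t) (i : Fin N) :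
    HasDerivAt (fun u => ((g u).mulVec (b u)) i)
      ((g''.mulVec (b t) + (g t).mulVec b') i) t := by
  simpa [mulVec, dotProduct, Finset.sum_add_distrib, mul_add] using
    HasDerivAt.fun_sum (fun j _ => (hg i j).mul (hb j))

private lemma symm_dot {N : ℕ} {M : Matrix (Fin N) (Fin N) ℝ} (hM : M.IsSymm)
    (u v : Fin N → ℝ) : u ⬝ᵥ M.mulVec v = v ⬝ᵥ M.mulVec u := by
  rw [dotProduct_mulVec, ← mulVec_transpose, show Mᵀ = M from hM, dotProduct_comm]

/-- Let `g t` be a differentiable family of inner products on `ℝ^N` (symmetric positive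
definite matrices, with entrywise derivative `g' t`) and `n t` the `g t`-unit normal to
a fixed hyperplane `H` (i.e. `g t (n t, x) = 0` for all `x ∈ H` and `g t (n t, n t) = 1`),
differentiable with derivative `n' t`.  Then
`dn/dt = (1/2) ġ(n, n) n − L_ġ n`, where `L_ġ = g⁻¹ ġ` is the endomorphism with
`g(L_ġ X, Y) = ġ(X, Y)`. -/
theorem deriv_unit_normal_of_evolving_metric
    {N : ℕ} (g g' : ℝ → Matrix (Fin N) (Fin N) ℝ)
    (H : Submodule ℝ (Fin N → ℝ)) (hH : Module.finrank ℝ H = N - 1)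
    (n n' : ℝ → (Fin N → ℝ)) (t : ℝ)
    (hgs : ∀ s, (g s).IsSymm) (hgp : ∀ s, (g s).PosDef)
    (hgd : ∀ i j s, HasDerivAt (fun u => g u i j) (g' s i j) s)
    (hnd : ∀ i s, HasDerivAt (fun u => n u i) (n' s i) s)
    (hperp : ∀ s, ∀ x ∈ H, n s ⬝ᵥ (g s).mulVec x = 0)
    (hunit : ∀ s, n s ⬝ᵥ (g s).mulVec (n s) = 1) :
    n' t = ((1 / 2) * (n t ⬝ᵥ (g' t).mulVec (n t))) • n t
      - (g t)⁻¹.mulVec ((g' t).mulVec (n t)) := by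
  classical
  rcases Nat.eq_zero_or_pos N with hN | hN
  · subst hN; funext i; exact i.elim0
  -- g' t is symmetric
  have hg's : (g' t).IsSymm := by
    ext i j
    rw [transpose_apply]
    refine HasDerivAt.unique ?_ (hgd i j t)
    have h2 := hgd j i t
    have : (fun u => g u j i) = fun u => g u i j := funext fun u => (hgs u).apply i j
    rwa [this] at h2
  -- derivative of the perpendicularity constraint
  have hA : ∀ x ∈ H, n' t ⬝ᵥ (g t).mulVec x + n t ⬝ᵥ (g' t).mulVec x = 0 := by
    intro x hx
    have hd : HasDerivAt (fun u => n u ⬝ᵥ (g u).mulVec x)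
        (n' t ⬝ᵥ (g t).mulVec x + n t ⬝ᵥ ((g' t).mulVec x + (g t).mulVec 0)) t :=
      dot_hasDerivAt (fun i => hnd i t)
        (mulVec_hasDerivAt (fun i j => hgd i j t) (fun j => hasDerivAt_const t (x j)))
    have hconst : (fun u => n u ⬝ᵥ (g u).mulVec x) = fun _ => (0 : ℝ) :=
      funext fun u => hperp u x hx
    rw [hconst] at hd
    have := hd.unique (hasDerivAt_const t 0)
    simpa [mulVec_zero] using this
  -- derivative of the unit-norm constraint
  have hB : n' t ⬝ᵥ (g t).mulVec (n t)
      + n t ⬝ᵥ ((g' t).mulVec (n t) + (g t).mulVec (n' t)) = 0 := by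
    have hd : HasDerivAt (fun u => n u ⬝ᵥ (g u).mulVec (n u))
        (n' t ⬝ᵥ (g t).mulVec (n t)
          + n t ⬝ᵥ ((g' t).mulVec (n t) + (g t).mulVec (n' t))) t :=
      dot_hasDerivAt (fun i => hnd i t)
        (mulVec_hasDerivAt (fun i j => hgd i j t) (fun j => hnd j t))
    have hconst : (fun u => n u ⬝ᵥ (g u).mulVec (n u)) = fun _ => (1 : ℝ) :=
      funext fun u => hunit u
    rw [hconst] at hd
    exact hd.unique (hasDerivAt_const t 1)
  have hsym : n t ⬝ᵥ (g t).mulVec (n' t) = n' t ⬝ᵥ (g t).mulVec (n t) :=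
    symm_dot (hgs t) _ _
  have hBn : n' t ⬝ᵥ (g t).mulVec (n t)
      = -(1 / 2) * (n t ⬝ᵥ (g' t).mulVec (n t)) := by
    rw [dotProduct_add, hsym] at hB
    linarith
  -- the candidate vector and the difference
  set c : ℝ := (1 / 2) * (n t ⬝ᵥ (g' t).mulVec (n t)) with hc
  set m : Fin N → ℝ := (g' t).mulVec (n t) with hm
  set v : Fin N → ℝ := c • n t - (g t)⁻¹.mulVec m with hv
  set w : Fin N → ℝ := n' t - v with hw
  have hinv : g t * (g t)⁻¹ = 1 := mul_nonsing_inv _ (hgp t).det_pos.ne'.isUnit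
  have hginvdot : ∀ y : Fin N → ℝ,
      ((g t)⁻¹.mulVec m) ⬝ᵥ (g t).mulVec y = m ⬝ᵥ y := by
    intro y
    rw [dotProduct_mulVec, ← mulVec_transpose, show (g t)ᵀ = g t from hgs t,
      mulVec_mulVec, hinv, one_mulVec]
  have hmdot : ∀ y : Fin N → ℝ, m ⬝ᵥ y = n t ⬝ᵥ (g' t).mulVec y := by
    intro y
    rw [hm, dotProduct_comm, symm_dot hg's]
  -- the linear functional y ↦ w ⬝ᵥ g t y
  let f : (Fin N → ℝ) →ₗ[ℝ] ℝ :=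
    { toFun := fun y => w ⬝ᵥ (g t).mulVec y
      map_add' := fun a b => by simp [mulVec_add, dotProduct_add]
      map_smul' := fun r a => by simp [mulVec_smul] }
  have hwdot : ∀ y : Fin N → ℝ, w ⬝ᵥ (g t).mulVec y
      = n' t ⬝ᵥ (g t).mulVec y - c * (n t ⬝ᵥ (g t).mulVec y)
        + n t ⬝ᵥ (g' t).mulVec y := by
    intro y
    rw [hw, hv, sub_dotProduct, sub_dotProduct, smul_dotProduct, hginvdot, hmdot]
    simp only [smul_eq_mul]
    ring
  have hfH : ∀ x ∈ H, f x = 0 := by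
    intro x hx
    have h1 := hA x hx
    have h2 := hperp t x hx
    show w ⬝ᵥ (g t).mulVec x = 0
    rw [hwdot, h2]
    linarith
  have hfn : f (n t) = 0 := by
    show w ⬝ᵥ (g t).mulVec (n t) = 0
    rw [hwdot, hunit t, hBn, hc]
    ring
  -- the kernel of f is everything
  have hnH : n t ∉ H := fun h => by
    have := hperp t (n t) h
    rw [hunit t] at this
    exact one_ne_zero this
  have hle : H ≤ LinearMap.ker f := fun x hx => LinearMap.mem_ker.2 (hfH x hx)
  have hnK : n t ∈ LinearMap.ker f := LinearMap.mem_ker.2 hfn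
  have hlt : H < LinearMap.ker f :=
    lt_of_le_of_ne hle fun h => hnH (h.symm ▸ hnK)
  have h1 : N - 1 < Module.finrank ℝ (LinearMap.ker f) :=
    hH ▸ Submodule.finrank_lt_finrank_of_lt hlt
  have h2 : Module.finrank ℝ (LinearMap.ker f) ≤ N := by
    simpa [Module.finrank_fin_fun] using Submodule.finrank_le (LinearMap.ker f)
  have hK : LinearMap.ker f = ⊤ := by
    apply Submodule.eq_top_of_finrank_eq
    rw [Module.finrank_fin_fun]
    omega
  -- conclude w = 0 by positive definiteness
  have hfw : w ⬝ᵥ (g t).mulVec w = 0 := by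
    have : w ∈ LinearMap.ker f := hK ▸ Submodule.mem_top
    exact LinearMap.mem_ker.1 this
  have hw0 : w = 0 := by
    by_contra h
    have := (hgp t).dotProduct_mulVec_pos h
    rw [show star w = w from rfl] at this
    rw [hfw] at this
    exact lt_irrefl 0 this
  have := sub_eq_zero.mp hw0
  rw [hw, hv] at hw0
  have := sub_eq_zero.mp hw0
  rw [this, hv, hm, hc]
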